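/- arXiv:1209.4116 — 2 statements merged into one kernel-verified Lean document; each statement's English description precedes it below -/
import Mathlib

section
/- Let Γ be a group acting by automorphisms α on an abelian group U of unitaries of an abelian von Neumann algebra Z, and let ω : Γ × Γ → U be a 2-cocycle, i.e. α_g(ω(h,k))·ω(gh,k)*·ω(g,hk)·ω(g,h)* = 1 for all g,h,k ∈ Γ. If sup_{g,h} ‖ω(g,h) − 1‖ < √2, then ψ := −i·log ω (defined via the principal branch of the logarithm, using continuous functional calculus) is a bounded 2-cocycle with values in the self-adjoint part of Z: sup_{g,h} ‖ψ(g,h)‖ < ∞ and α_g(ψ(h,k)) − ψ(gh,k) + ψ(g,hk) − ψ(g,h) = 0 for all g, h, k ∈ Γ. -/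
noncomputable section

open Complex
open scoped Real Pointwise

private lemma re_pos_of_close {s : ℝ} (hs : s < Real.sqrt 2) {z : ℂ}
    (h1 : ‖z‖ = 1) (h2 : ‖z - 1‖ ≤ s) : 0 < z.re := by
  have h0 : (0:ℝ) ≤ ‖z - 1‖ := norm_nonneg _
  have hlt : ‖z - 1‖ < Real.sqrt 2 := lt_of_le_of_lt h2 hs
  have hsq : Complex.normSq (z - 1) < 2 := by
    have := Real.sq_sqrt (by norm_num : (0:ℝ) ≤ 2)
    have h' : ‖z - 1‖ ^ 2 < 2 := by nlinarith [Real.sqrt_nonneg 2]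
    rwa [Complex.sq_norm] at h'
  have e1 : Complex.normSq z = 1 := by
    rw [← Complex.sq_norm, h1]; norm_num
  have e2 : Complex.normSq (z - 1) = Complex.normSq z - 2 * z.re + 1 := by
    simp only [Complex.normSq_apply, Complex.sub_re, Complex.sub_im, Complex.one_re,
      Complex.one_im]
    ring
  nlinarith

private lemma negI_log_eq_arg {z : ℂ} (h1 : ‖z‖ = 1) :
    -Complex.I * Complex.log z = ((Complex.arg z : ℝ) : ℂ) := by
  rw [Complex.log, h1, Real.log_one]
  push_cast
  ring_nf
  rw [Complex.I_sq]
  ring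

private lemma ne_zero_of_abs_one {z : ℂ} (h1 : ‖z‖ = 1) : z ≠ 0 := by
  intro h; rw [h] at h1; simp at h1

private lemma arg_cocycle {s : ℝ} (hs : s < Real.sqrt 2) {a b c d : ℂ}
    (ha1 : ‖a‖ = 1) (hb1 : ‖b‖ = 1)
    (hc1 : ‖c‖ = 1) (hd1 : ‖d‖ = 1)
    (ha : ‖a - 1‖ ≤ s) (hb : ‖b - 1‖ ≤ s)
    (hc : ‖c - 1‖ ≤ s) (hd : ‖d - 1‖ ≤ s)
    (h : a * c = b * d) :
    (-Complex.I * Complex.log a) - (-Complex.I * Complex.log b)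
      + (-Complex.I * Complex.log c) - (-Complex.I * Complex.log d) = 0 := by
  have haπ : |Complex.arg a| < π / 2 :=
    Complex.abs_arg_lt_pi_div_two_iff.2 (Or.inl (re_pos_of_close hs ha1 ha))
  have hbπ : |Complex.arg b| < π / 2 :=
    Complex.abs_arg_lt_pi_div_two_iff.2 (Or.inl (re_pos_of_close hs hb1 hb))
  have hcπ : |Complex.arg c| < π / 2 :=
    Complex.abs_arg_lt_pi_div_two_iff.2 (Or.inl (re_pos_of_close hs hc1 hc))
  have hdπ : |Complex.arg d| < π / 2 :=
    Complex.abs_arg_lt_pi_div_two_iff.2 (Or.inl (re_pos_of_close hs hd1 hd))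
  rw [abs_lt] at haπ hbπ hcπ hdπ
  have hπ : (0:ℝ) < π := Real.pi_pos
  have h1 : Complex.arg (a * c) = Complex.arg a + Complex.arg c :=
    Complex.arg_mul (ne_zero_of_abs_one ha1) (ne_zero_of_abs_one hc1)
      ⟨by linarith, by linarith⟩
  have h2 : Complex.arg (b * d) = Complex.arg b + Complex.arg d :=
    Complex.arg_mul (ne_zero_of_abs_one hb1) (ne_zero_of_abs_one hd1)
      ⟨by linarith, by linarith⟩
  have key : Complex.arg a - Complex.arg b + Complex.arg c - Complex.arg d = 0 := by
    have := h1.symm.trans (by rw [h, h2])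
    linarith
  rw [negI_log_eq_arg ha1, negI_log_eq_arg hb1, negI_log_eq_arg hc1, negI_log_eq_arg hd1]
  exact_mod_cast congrArg (fun r : ℝ => (r : ℂ)) key

private lemma spec_facts {A : Type*} [CommCStarAlgebra A] [Nontrivial A] {u : A} (hu : u ∈ unitary A)
    {s : ℝ} (hb : ‖u - 1‖ ≤ s) {z : ℂ} (hz : z ∈ spectrum ℂ u) :
    ‖z‖ = 1 ∧ ‖z - 1‖ ≤ s := by
  constructor
  · have := spectrum.subset_circle_of_unitary hu hz
    simpa using this
  · have hz' : z - 1 ∈ spectrum ℂ (u - 1) := by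
      have h1 : z - 1 ∈ spectrum ℂ u - {(1:ℂ)} := Set.sub_mem_sub hz rfl
      rw [spectrum.sub_singleton_eq] at h1
      simpa using h1
    calc ‖z - 1‖ = ‖z - 1‖ := rfl
      _ ≤ ‖u - 1‖ := spectrum.norm_le_norm_of_mem hz'
      _ ≤ s := hb

/-- taking logarithms of a uniformly close-to-1 unitary-valued 2-cocycle
`ω` on a group `Γ` with values in (the unitary group of) an abelian von Neumann algebra
`A` yields a bounded additive 2-cocycle `ψ = -i log ω` with self-adjoint values. -/
theorem stmt_9 {Γ : Type*} [Group Γ] {A : Type*} [CommCStarAlgebra A]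
    (α : Γ →* (A ≃ₐ[ℂ] A)) (hαstar : ∀ g x, α g (star x) = star (α g x))
    (ω : Γ → Γ → A) (hωu : ∀ g h, ω g h ∈ unitary A)
    (hcocycle : ∀ g h k,
      α g (ω h k) * star (ω (g * h) k) * ω g (h * k) * star (ω g h) = 1)
    (hgap : ∃ s : ℝ, s < Real.sqrt 2 ∧ ∀ g h, ‖ω g h - 1‖ ≤ s) :
    ∀ ψ : Γ → Γ → A,
      (∀ g h, ψ g h = cfc (fun z : ℂ => -Complex.I * Complex.log z) (ω g h)) →
      (∀ g h, IsSelfAdjoint (ψ g h)) ∧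
      (∃ C : ℝ, ∀ g h, ‖ψ g h‖ ≤ C) ∧
      (∀ g h k, α g (ψ h k) - ψ (g * h) k + ψ g (h * k) - ψ g h = 0) := by
  obtain ⟨s, hs, hbound⟩ := hgap
  intro ψ hψ
  rcases subsingleton_or_nontrivial A with hA | hA
  · refine ⟨fun g h => Subsingleton.elim _ _, ⟨0, fun g h => ?_⟩,
      fun g h k => Subsingleton.elim _ _⟩
    rw [Subsingleton.elim (ψ g h) (0 : A)]
    simp
  set f : ℂ → ℂ := fun z => -Complex.I * Complex.log z with hf
  -- normality
  have hnormal : ∀ g h, IsStarNormal (ω g h) := fun g h =>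
    isStarNormal_of_mem_unitary (hωu g h)
  -- spectrum facts
  have hspec : ∀ g h, ∀ z ∈ spectrum ℂ (ω g h),
      ‖z‖ = 1 ∧ ‖z - 1‖ ≤ s := fun g h z hz =>
    spec_facts (hωu g h) (hbound g h) hz
  -- continuity of f on the spectra
  have hcont : ∀ g h, ContinuousOn f (spectrum ℂ (ω g h)) := by
    intro g h z hz
    obtain ⟨h1, h2⟩ := hspec g h z hz
    have hre : 0 < z.re := re_pos_of_close hs h1 h2
    exact (continuousAt_const.mul (continuousAt_clog (Or.inl hre))).continuousWithinAt
  refine ⟨?_, ⟨Real.pi, ?_⟩, ?_⟩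
  · -- self-adjointness
    intro g h
    have := hnormal g h
    rw [hψ g h]
    rw [IsSelfAdjoint, ← cfc_star]
    apply cfc_congr
    intro z hz
    obtain ⟨h1, _⟩ := hspec g h z hz
    show star (f z) = f z
    rw [hf]
    simp only
    rw [negI_log_eq_arg h1, RCLike.star_def, Complex.conj_ofReal]
  · -- norm bound
    intro g h
    have := hnormal g h
    rw [hψ g h]
    apply norm_cfc_le Real.pi_pos.le
    intro z hz
    obtain ⟨h1, _⟩ := hspec g h z hz
    rw [hf]
    simp only
    rw [negI_log_eq_arg h1]
    simpa using Complex.abs_arg_le_pi z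
  · -- cocycle identity
    intro g h k
    -- the multiplicative relation
    have r1 : star (ω (g * h) k) * ω (g * h) k = 1 := (Unitary.mem_iff.mp (hωu _ _)).1
    have r2 : star (ω g h) * ω g h = 1 := (Unitary.mem_iff.mp (hωu _ _)).1
    have r3 := hcocycle g h k
    have hprod : α g (ω h k) * ω g (h * k) = ω (g * h) k * ω g h := by
      have e : α g (ω h k) * ω g (h * k)
          = (α g (ω h k) * star (ω (g * h) k) * ω g (h * k) * star (ω g h))
            * (ω (g * h) k * ω g h) := by
        calc α g (ω h k) * ω g (h * k)
            = α g (ω h k) * ω g (h * k) * (star (ω (g * h) k) * ω (g * h) k)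
              * (star (ω g h) * ω g h) := by rw [r1, r2]; ring
          _ = _ := by ring
      rw [e, r3, one_mul]
    -- reduce to characters
    have hinj := (gelfandTransform_isometry A).injective
    set t : A := α g (ψ h k) - ψ (g * h) k + ψ g (h * k) - ψ g h with ht
    have hchar : ∀ φ : WeakDual.characterSpace ℂ A, φ t = 0 := by
      intro φ
      -- the pulled-back character
      set φg : WeakDual.characterSpace ℂ A :=
        WeakDual.CharacterSpace.equivAlgHom.symm
          ((WeakDual.CharacterSpace.equivAlgHom φ).comp (α g).toAlgHom) with hφg
      have hφg' : ∀ x : A, φg x = φ (α g x) := by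
        intro x
        rw [hφg]
        simp [WeakDual.CharacterSpace.equivAlgHom_symm_coe]
      -- character applied to cfc
      have hmap : ∀ (φ' : WeakDual.characterSpace ℂ A) (g' h' : Γ),
          φ' (cfc f (ω g' h')) = f (φ' (ω g' h')) := by
        intro φ' g' h'
        have := hnormal g' h'
        rw [StarAlgHomClass.map_cfc (S := ℂ) φ' f (ω g' h') (hcont g' h')
          (map_continuous φ')]
        have : φ' (ω g' h') = algebraMap ℂ ℂ (φ' (ω g' h')) := by simp [Algebra.algebraMap_self_apply]
        rw [this, cfc_algebraMap]
        simp [Algebra.algebraMap_self_apply]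
      -- spectrum membership of character values
      have hmem : ∀ (φ' : WeakDual.characterSpace ℂ A) (g' h' : Γ),
          φ' (ω g' h') ∈ spectrum ℂ (ω g' h') := by
        intro φ' g' h'
        exact AlgHom.apply_mem_spectrum (WeakDual.CharacterSpace.equivAlgHom φ') (ω g' h')
      obtain ⟨ha1, ha2⟩ := hspec h k _ (hmem φg h k)
      obtain ⟨hb1, hb2⟩ := hspec (g * h) k _ (hmem φ (g * h) k)
      obtain ⟨hc1, hc2⟩ := hspec g (h * k) _ (hmem φ g (h * k))
      obtain ⟨hd1, hd2⟩ := hspec g h _ (hmem φ g h)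
      have hmul : φg (ω h k) * φ (ω g (h * k)) = φ (ω (g * h) k) * φ (ω g h) := by
        have := congrArg φ hprod
        rw [map_mul, map_mul, ← hφg'] at this
        exact this
      have key := arg_cocycle hs ha1 hb1 hc1 hd1 ha2 hb2 hc2 hd2 hmul
      rw [ht]
      rw [map_sub, map_add, map_sub]
      rw [← hφg' (ψ h k)]
      rw [hψ h k, hψ (g * h) k, hψ g (h * k), hψ g h]
      rw [hmap φg h k, hmap φ (g * h) k, hmap φ g (h * k), hmap φ g h]
      exact key
    have : WeakDual.gelfandTransform ℂ A t = WeakDual.gelfandTransform ℂ A 0 := by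
      rw [map_zero]
      ext φ
      simpa using hchar φ
    exact hinj this
end
end

section
/- Let M ⊆ B(H) be a von Neumann algebra with a cyclic vector, and let δ : M → B(H) be a derivation. Then ‖δ‖_cb ≤ 2‖δ‖_row, where ‖δ‖_row = sup over n and over contractions r ∈ M_{1×n}(M) of ‖δ_{1×n}(r)‖. -/
set_option linter.unusedSectionVars false
set_option maxHeartbeats 1000000
set_option synthInstance.maxHeartbeats 400000


noncomputable section

variable {H : Type*} [NormedAddCommGroup H] [InnerProductSpace ℂ H] [CompleteSpace H]

/-- The amplification of an `n × n` matrix of operators on `H` to an operator on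
`H ⊗ ℂⁿ = ℓ²(Fin n; H)`. -/
def amp {n : ℕ} (a : Matrix (Fin n) (Fin n) (H →L[ℂ] H)) :
    PiLp 2 (fun _ : Fin n => H) →L[ℂ] PiLp 2 (fun _ : Fin n => H) :=
  ((PiLp.continuousLinearEquiv 2 ℂ (fun _ : Fin n => H)).symm.toContinuousLinearMap) ∘L
    (ContinuousLinearMap.pi fun i => ∑ j, (a i j) ∘L (ContinuousLinearMap.proj j)) ∘L
    ((PiLp.continuousLinearEquiv 2 ℂ (fun _ : Fin n => H)).toContinuousLinearMap)

/-- The row operator `ℓ²(Fin n; H) → H` associated to a `1 × n` row of operators. -/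
def rowOp {n : ℕ} (r : Fin n → (H →L[ℂ] H)) : PiLp 2 (fun _ : Fin n => H) →L[ℂ] H :=
  (∑ j, (r j) ∘L (ContinuousLinearMap.proj j)) ∘L
    ((PiLp.continuousLinearEquiv 2 ℂ (fun _ : Fin n => H)).toContinuousLinearMap)

lemma rowOp_apply {n : ℕ} (r : Fin n → (H →L[ℂ] H)) (v : PiLp 2 (fun _ : Fin n => H)) :
    rowOp r v = ∑ j, r j (v j) := by
  simp [rowOp, ContinuousLinearMap.sum_apply]

lemma amp_apply {n : ℕ} (a : Matrix (Fin n) (Fin n) (H →L[ℂ] H))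
    (v : PiLp 2 (fun _ : Fin n => H)) (i : Fin n) :
    amp a v i = ∑ j, a i j (v j) := by
  simp [amp, ContinuousLinearMap.sum_apply]

lemma rowOp_comp_amp {n : ℕ} (r : Fin n → (H →L[ℂ] H)) (a : Matrix (Fin n) (Fin n) (H →L[ℂ] H)) :
    (rowOp r) ∘L (amp a) = rowOp (fun k => ∑ j, (r j) * (a j k)) := by
  ext v
  simp only [ContinuousLinearMap.comp_apply, rowOp_apply, amp_apply,
    ContinuousLinearMap.sum_apply, ContinuousLinearMap.mul_apply, map_sum]
  rw [Finset.sum_comm]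

lemma rowOp_add {n : ℕ} (r s : Fin n → (H →L[ℂ] H)) :
    rowOp (fun j => r j + s j) = rowOp r + rowOp s := by
  ext v
  simp [rowOp_apply, Finset.sum_add_distrib]

lemma rowOp_smul {n : ℕ} (c : ℂ) (r : Fin n → (H →L[ℂ] H)) :
    rowOp (fun j => c • r j) = c • rowOp r := by
  ext v
  simp [rowOp_apply, Finset.smul_sum]

lemma rowOp_zero {n : ℕ} : rowOp (fun _ : Fin n => (0 : H →L[ℂ] H)) = 0 := by
  ext v; simp [rowOp_apply]

lemma rowOp_single {n : ℕ} (r : Fin n → (H →L[ℂ] H)) (j : Fin n) (h : H) :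
    rowOp r ((PiLp.continuousLinearEquiv 2 ℂ (fun _ : Fin n => H)).symm (Pi.single j h)) = r j h := by
  rw [rowOp_apply]
  have : ∀ k, r k (((PiLp.continuousLinearEquiv 2 ℂ (fun _ : Fin n => H)).symm (Pi.single j h)) k)
      = if k = j then r j h else 0 := by
    intro k
    by_cases hk : k = j <;> simp [hk, Pi.single_apply]
  simp only [this]
  simp

lemma commute_cfc' {X y : H →L[ℂ] H} (hX : IsSelfAdjoint X) (h : Commute y X) (f : ℝ → ℝ) :
    Commute y (cfc f X) := by
  by_cases hf : ContinuousOn f (spectrum ℝ X)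
  · rw [cfc_apply f X hX hf]
    set g : C(spectrum ℝ X, ℝ) := ⟨_, hf.restrict⟩
    have main : ∀ g : C(spectrum ℝ X, ℝ), Commute y (cfcHom hX g) := by
      intro g
      induction g using ContinuousMap.induction_on_of_compact with
      | const r =>
        have : (ContinuousMap.const (spectrum ℝ X) r) = algebraMap ℝ C(spectrum ℝ X, ℝ) r := rfl
        rw [this, AlgHomClass.commutes]
        exact Algebra.commute_algebraMap_right r y
      | id =>
        rw [cfcHom_id hX]; exact h
      | star_id =>
        rw [star_trivial, cfcHom_id hX]; exact h
      | add f g hf hg => rw [map_add]; exact hf.add_right hg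
      | mul f g hf hg => rw [map_mul]; exact hf.mul_right hg
      | frequently f hf =>
        have hcl : IsClosed {g : C(spectrum ℝ X, ℝ) | Commute y (cfcHom hX g)} := by
          have : Continuous (fun g : C(spectrum ℝ X, ℝ) => cfcHom hX g) :=
            (cfcHom_isClosedEmbedding hX).continuous
          exact isClosed_eq (by fun_prop) (by fun_prop)
        exact hcl.closure_subset (mem_closure_iff_frequently.mpr hf)
    exact main g
  · rw [cfc_apply_of_not_continuousOn X hf]
    exact Commute.zero_right y

lemma cfc_mem_vNa (M : VonNeumannAlgebra H) {X : H →L[ℂ] H} (hXM : X ∈ M)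
    (hX : IsSelfAdjoint X) (f : ℝ → ℝ) : cfc f X ∈ M := by
  have : cfc f X ∈ Set.centralizer (Set.centralizer (M : Set (H →L[ℂ] H))) := by
    intro y hy
    have hyX : Commute y X := (hy X hXM).symm
    exact commute_cfc' hX hyX f
  rwa [M.centralizer_centralizer] at this
lemma opBC (M : VonNeumannAlgebra H) {n : ℕ} (x : Fin n → (H →L[ℂ] H)) (hx : ∀ j, x j ∈ M)
    {t : ℝ} (ht : 0 < t) :
    ∃ B C : H →L[ℂ] H, B ∈ M ∧ IsSelfAdjoint B ∧ IsSelfAdjoint C ∧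
      B * C = 1 ∧ C * B = 1 ∧
      C * C = (∑ j, star (x j) * x j) + t • 1 ∧
      B * (∑ j, star (x j) * x j) * B = 1 - t • (B * B) := by
  set X : H →L[ℂ] H := ∑ j, star (x j) * x j with hXdef
  have hXM : X ∈ M := by
    exact sum_mem (fun j _ => mul_mem (star_mem (hx j)) (hx j))
  have hXsa : IsSelfAdjoint X := by
    rw [hXdef, IsSelfAdjoint, star_sum]
    exact Finset.sum_congr rfl fun j _ => by simp [star_mul]
  have hXpos : (0 : H →L[ℂ] H) ≤ X := by
    rw [hXdef]
    exact Finset.sum_nonneg fun j _ => star_mul_self_nonneg (x j)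
  have hspec : ∀ s ∈ spectrum ℝ X, 0 ≤ s := spectrum_nonneg_of_nonneg hXpos
  have hpos : ∀ s ∈ spectrum ℝ X, 0 < s + t := fun s hs => by
    have := hspec s hs; linarith
  set c : ℝ → ℝ := fun s => Real.sqrt (s + t) with hcdef
  set b : ℝ → ℝ := fun s => (Real.sqrt (s + t))⁻¹ with hbdef
  have hc : ContinuousOn c (spectrum ℝ X) :=
    (Real.continuous_sqrt.comp (continuous_id.add continuous_const)).continuousOn
  have hb : ContinuousOn b (spectrum ℝ X) := by
    apply hc.inv₀
    intro s hs
    exact (Real.sqrt_pos.mpr (hpos s hs)).ne'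
  set B := cfc b X with hBdef
  set C := cfc c X with hCdef
  have hBM : B ∈ M := cfc_mem_vNa M hXM hXsa b
  have hBsa : IsSelfAdjoint B := cfc_predicate b X
  have hCsa : IsSelfAdjoint C := cfc_predicate c X
  have hBC : B * C = 1 := by
    rw [hBdef, hCdef, ← cfc_mul b c X hb hc]
    rw [show (fun s => b s * c s) = fun s => (Real.sqrt (s + t))⁻¹ * Real.sqrt (s + t) from rfl]
    rw [cfc_congr (g := fun _ => (1:ℝ)) (fun s hs => by
      field_simp [(Real.sqrt_pos.mpr (hpos s hs)).ne'])]
    exact cfc_const_one ℝ X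
  have hCB : C * B = 1 := by
    rw [hBdef, hCdef, ← cfc_mul c b X hc hb]
    rw [cfc_congr (g := fun _ => (1:ℝ)) (fun s hs => by
      simp only [c, b]
      field_simp [(Real.sqrt_pos.mpr (hpos s hs)).ne'])]
    exact cfc_const_one ℝ X
  have hCC : C * C = X + t • 1 := by
    rw [hCdef, ← cfc_mul c c X hc hc]
    rw [cfc_congr (g := fun s => s + t) (fun s hs => by
      simp only [c]
      exact Real.mul_self_sqrt (hpos s hs).le)]
    rw [cfc_add_const t (fun s => s) X continuousOn_id hXsa]
    rw [cfc_id' ℝ X hXsa, Algebra.algebraMap_eq_smul_one]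
  have hkey : B * X * B = 1 - t • (B * B) := by
    have h1 : B * (C * C) * B = 1 := by
      have : B * (C * C) * B = (B * C) * (C * B) := by noncomm_ring
      rw [this, hBC, hCB, one_mul]
    rw [hCC] at h1
    have h2 : B * (X + t • 1) * B = B * X * B + t • (B * B) := by
      rw [mul_add, add_mul]
      congr 1
      rw [mul_smul_comm, smul_mul_assoc, mul_one]
    rw [h2] at h1
    exact eq_sub_of_add_eq h1
  exact ⟨B, C, hBM, hBsa, hCsa, hBC, hCB, hCC, hkey⟩
open scoped InnerProductSpace in
open RCLike Finset in
lemma approx_row (M : VonNeumannAlgebra H)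
    (hcyc : ∃ ξ : H, Dense {y : H | ∃ x ∈ M, x ξ = y})
    {n : ℕ} (u : PiLp 2 (fun _ : Fin n => H)) {ε : ℝ} (hε : 0 < ε) :
    ∃ r : Fin n → (H →L[ℂ] H), (∀ j, r j ∈ M) ∧ ‖rowOp r‖ ≤ 1 ∧ ‖u‖ - ε ≤ ‖rowOp r u‖ := by
  by_cases hm : ‖u‖ ≤ ε
  · refine ⟨fun _ => 0, fun _ => zero_mem _, ?_, ?_⟩
    · rw [rowOp_zero]
      exact le_trans (le_of_eq (ContinuousLinearMap.opNorm_zero)) zero_le_one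
    · rw [rowOp_zero]
      simp only [ContinuousLinearMap.zero_apply, norm_zero]
      linarith
  push_neg at hm
  set m : ℝ := ‖u‖ with hmdef
  have hm0 : 0 < m := lt_trans hε hm
  have hn : n ≠ 0 := by
    rintro rfl
    have h0 : m ^ 2 = 0 := by rw [hmdef, PiLp.norm_sq_eq_of_L2]; simp
    nlinarith
  have hn1 : (1 : ℝ) ≤ n := by exact_mod_cast Nat.one_le_iff_ne_zero.mpr hn
  obtain ⟨ξ₀, hdense⟩ := hcyc
  have hξ₀ : ξ₀ ≠ 0 := by
    rintro rfl
    have hsub : {y : H | ∃ x ∈ M, x 0 = y} ⊆ {0} := by rintro y ⟨x, -, rfl⟩; simp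
    have hz : ∀ h : H, h = 0 := fun h => by
      have h2 : h ∈ closure ({0} : Set H) := closure_mono hsub (hdense h)
      simpa using h2
    have : m = 0 := by
      have hu : u = 0 := PiLp.ext fun j => by simp [hz (u j)]
      rw [hmdef, hu]; simp
    linarith
  set ξ : H := ((‖ξ₀‖ : ℂ))⁻¹ • ξ₀ with hξdef
  have hξ : ‖ξ‖ = 1 := by
    rw [hξdef, norm_smul]
    simp [norm_ne_zero_iff.mpr hξ₀]
  have hdense' : ∀ (h : H) (d : ℝ), 0 < d → ∃ x, x ∈ M ∧ ‖x ξ - h‖ < d := by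
    intro h d hd
    have h1 : h ∈ closure {y : H | ∃ x ∈ M, x ξ₀ = y} := hdense h
    rw [Metric.mem_closure_iff] at h1
    obtain ⟨y, ⟨x, hxM, rfl⟩, hy⟩ := h1 d hd
    refine ⟨(‖ξ₀‖ : ℂ) • x, ?_, ?_⟩
    · rw [Algebra.smul_def]
      exact mul_mem (M.toStarSubalgebra.algebraMap_mem _) hxM
    · have he : ((‖ξ₀‖ : ℂ) • x) ξ = x ξ₀ := by
        rw [hξdef, ContinuousLinearMap.smul_apply, map_smul, smul_smul,
          mul_inv_cancel₀ (by exact_mod_cast norm_ne_zero_iff.mpr hξ₀), one_smul]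
      rw [he, ← dist_eq_norm, dist_comm]
      exact hy
  set d : ℝ := ε / (4 * (n + 1)) with hddef
  have hd : 0 < d := by positivity
  set t : ℝ := (ε / 2) ^ 2 with htdef
  have ht : 0 < t := by positivity
  set D : ℝ := n * d with hDdef
  have hD0 : 0 ≤ D := by positivity
  have hdD : d ≤ D := le_mul_of_one_le_left hd.le hn1
  have hDε : D ≤ ε / 4 := by
    rw [hDdef, hddef, ← mul_div_assoc,
      div_le_div_iff₀ (by positivity) (by norm_num : (0:ℝ) < 4)]
    nlinarith [hε, hn1]
  have hexists : ∀ j : Fin n, ∃ x, x ∈ M ∧ ‖x ξ - u j‖ < d := fun j => hdense' (u j) d hd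
  choose x hxM hxd using hexists
  obtain ⟨B, C, hBM, hBsa, hCsa, hBC, hCB, hCC, hkey⟩ := opBC M x hxM ht
  set X : H →L[ℂ] H := ∑ j, star (x j) * x j with hXdef
  have hBadj : ContinuousLinearMap.adjoint B = B := hBsa.adjoint_eq
  have hCadj : ContinuousLinearMap.adjoint C = C := hCsa.adjoint_eq
  set r : Fin n → (H →L[ℂ] H) := fun j => B * star (x j) with hrdef
  have hrM : ∀ j, r j ∈ M := fun j => mul_mem hBM (star_mem (hxM j))
  have hadj : ∀ j, r j = ContinuousLinearMap.adjoint (x j * B) := by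
    intro j
    rw [← ContinuousLinearMap.star_eq_adjoint, star_mul, hBsa.star_eq]
  have humj : ∀ j, ‖u j‖ ≤ m := by
    intro j
    have h1 : ‖u j‖ ^ 2 ≤ m ^ 2 := by
      rw [hmdef, PiLp.norm_sq_eq_of_L2]
      exact Finset.single_le_sum (fun i _ => sq_nonneg ‖u i‖) (Finset.mem_univ j)
    nlinarith [norm_nonneg (u j), hm0]
  -- norm bound for rowOp r
  have hrow1 : ‖rowOp r‖ ≤ 1 := by
    refine ContinuousLinearMap.opNorm_le_bound _ zero_le_one fun v => ?_
    rw [one_mul]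
    set w : H := rowOp r v with hwdef
    rcases eq_or_ne w 0 with hw | hw
    · rw [hw]; simp
    have hwpos : 0 < ‖w‖ := norm_pos_iff.mpr hw
    have h1 : ‖w‖ ^ 2 = ∑ j, re (⟪v j, (x j) (B w)⟫_ℂ) := by
      rw [← inner_self_eq_norm_sq (𝕜 := ℂ)]
      nth_rewrite 1 [hwdef, rowOp_apply]
      rw [sum_inner, map_sum]
      refine Finset.sum_congr rfl fun j _ => ?_
      rw [hadj j, ContinuousLinearMap.adjoint_inner_left, ContinuousLinearMap.mul_apply]
    have h2 : ∑ j, ‖(x j) (B w)‖ ^ 2 ≤ ‖w‖ ^ 2 := by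
      have e1 : ∀ j, ‖(x j) (B w)‖ ^ 2 = re (⟪B w, (star (x j) * (x j)) (B w)⟫_ℂ) := by
        intro j
        rw [← inner_self_eq_norm_sq (𝕜 := ℂ)]
        congr 1
        rw [ContinuousLinearMap.mul_apply, ContinuousLinearMap.star_eq_adjoint,
          ContinuousLinearMap.adjoint_inner_right]
      have e2 : ∑ j, ‖(x j) (B w)‖ ^ 2 = re (⟪w, (B * X * B) w⟫_ℂ) := by
        simp_rw [e1]
        rw [← map_sum, ← inner_sum]
        have e3 : ∑ j, (star (x j) * (x j)) (B w) = X (B w) := by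
          rw [hXdef, ContinuousLinearMap.sum_apply]
        rw [e3]
        have e4 : ⟪B w, X (B w)⟫_ℂ = ⟪w, (B * X * B) w⟫_ℂ := by
          nth_rewrite 1 [← hBadj]
          rw [ContinuousLinearMap.adjoint_inner_left]
          simp [ContinuousLinearMap.mul_apply]
        rw [e4]
      rw [e2, hkey]
      have e5 : ((1 : H →L[ℂ] H) - t • (B * B)) w = w - t • (B (B w)) := by
        simp [ContinuousLinearMap.sub_apply, ContinuousLinearMap.smul_apply,
          ContinuousLinearMap.mul_apply]
      rw [e5, inner_sub_right, map_sub, inner_self_eq_norm_sq (𝕜 := ℂ)]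
      have e6 : re (⟪w, t • (B (B w))⟫_ℂ) = t * ‖B w‖ ^ 2 := by
        rw [RCLike.real_smul_eq_coe_smul (K := ℂ), inner_smul_right, RCLike.re_ofReal_mul]
        have e7 : ⟪B w, B w⟫_ℂ = ⟪w, B (B w)⟫_ℂ := by
          nth_rewrite 1 [← hBadj]
          rw [ContinuousLinearMap.adjoint_inner_left]
        rw [← e7, inner_self_eq_norm_sq (𝕜 := ℂ)]
      rw [e6]
      nlinarith [sq_nonneg ‖B w‖, ht]
    have h4 : ‖w‖ ^ 2 ≤ ∑ j, ‖v j‖ * ‖(x j) (B w)‖ := by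
      rw [h1]
      exact Finset.sum_le_sum fun j _ => re_inner_le_norm _ _
    have h3 : (∑ j, ‖v j‖ * ‖(x j) (B w)‖) ^ 2 ≤
        (∑ j, ‖v j‖ ^ 2) * (∑ j, ‖(x j) (B w)‖ ^ 2) :=
      Finset.sum_mul_sq_le_sq_mul_sq _ _ _
    have hv2 : ∑ j, ‖v j‖ ^ 2 = ‖v‖ ^ 2 := (PiLp.norm_sq_eq_of_L2 _ v).symm
    have hP0 : 0 ≤ ∑ j, ‖v j‖ * ‖(x j) (B w)‖ :=
      Finset.sum_nonneg fun j _ => mul_nonneg (norm_nonneg _) (norm_nonneg _)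
    have h5 : (∑ j, ‖v j‖ * ‖(x j) (B w)‖) ≤ ‖v‖ * ‖w‖ := by
      have h6 : (∑ j, ‖v j‖ * ‖(x j) (B w)‖) ^ 2 ≤ (‖v‖ * ‖w‖) ^ 2 := by
        calc (∑ j, ‖v j‖ * ‖(x j) (B w)‖) ^ 2
            ≤ (∑ j, ‖v j‖ ^ 2) * (∑ j, ‖(x j) (B w)‖ ^ 2) := h3
          _ ≤ ‖v‖ ^ 2 * ‖w‖ ^ 2 := by
              rw [hv2]
              exact mul_le_mul_of_nonneg_left h2 (sq_nonneg _)
          _ = (‖v‖ * ‖w‖) ^ 2 := by ring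
      nlinarith [mul_nonneg (norm_nonneg v) (norm_nonneg w)]
    have h7 : ‖w‖ ^ 2 ≤ ‖v‖ * ‖w‖ := le_trans h4 h5
    nlinarith [hwpos]
  -- lower bound
  set g : H := rowOp r u with hgdef
  set h₀ : H := C ξ with hh0def
  have hBCξ : B (C ξ) = ξ := by
    rw [← ContinuousLinearMap.mul_apply, hBC, ContinuousLinearMap.one_apply]
  have hpair : ∀ j, ⟪h₀, (r j) (u j)⟫_ℂ = ⟪(x j) ξ, u j⟫_ℂ := by
    intro j
    rw [hadj j, ContinuousLinearMap.adjoint_inner_right]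
    congr 1
    rw [ContinuousLinearMap.mul_apply, hh0def, hBCξ]
  have hre1 : re (⟪h₀, g⟫_ℂ) = ∑ j, re (⟪(x j) ξ, u j⟫_ℂ) := by
    rw [hgdef, rowOp_apply, inner_sum, map_sum]
    exact Finset.sum_congr rfl fun j _ => by rw [hpair j]
  have hterm : ∀ j, ‖u j‖ ^ 2 - d * m ≤ re (⟪(x j) ξ, u j⟫_ℂ) := by
    intro j
    have e1 : ⟪(x j) ξ, u j⟫_ℂ = ⟪(x j) ξ - u j, u j⟫_ℂ + ⟪u j, u j⟫_ℂ := by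
      rw [inner_sub_left]; ring
    have e2 : re (⟪(x j) ξ - u j, u j⟫_ℂ) ≥ -(d * m) := by
      have h8 := re_inner_le_norm (𝕜 := ℂ) (-((x j) ξ - u j)) (u j)
      rw [inner_neg_left, map_neg] at h8
      have h9 : ‖-((x j) ξ - u j)‖ = ‖(x j) ξ - u j‖ := norm_neg _
      rw [h9] at h8
      have h10 : ‖(x j) ξ - u j‖ * ‖u j‖ ≤ d * m :=
        mul_le_mul (hxd j).le (humj j) (norm_nonneg _) hd.le
      linarith
    rw [e1, map_add, inner_self_eq_norm_sq (𝕜 := ℂ)]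
    linarith
  have hre2 : m ^ 2 - D * m ≤ re (⟪h₀, g⟫_ℂ) := by
    rw [hre1]
    have e1 : ∑ j, (‖u j‖ ^ 2 - d * m) ≤ ∑ j, re (⟪(x j) ξ, u j⟫_ℂ) :=
      Finset.sum_le_sum fun j _ => hterm j
    have e2 : ∑ j, (‖u j‖ ^ 2 - d * m) = m ^ 2 - D * m := by
      rw [Finset.sum_sub_distrib, ← PiLp.norm_sq_eq_of_L2, ← hmdef, Finset.sum_const,
        Finset.card_univ, Fintype.card_fin, nsmul_eq_mul, hDdef]
      ring
    linarith
  have hCS : re (⟪h₀, g⟫_ℂ) ≤ ‖h₀‖ * ‖g‖ := re_inner_le_norm _ _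
  have hh0sq : ‖h₀‖ ^ 2 = (∑ j, ‖(x j) ξ‖ ^ 2) + t := by
    rw [← inner_self_eq_norm_sq (𝕜 := ℂ), hh0def]
    have e1 : ⟪C ξ, C ξ⟫_ℂ = ⟪ξ, (C * C) ξ⟫_ℂ := by
      rw [ContinuousLinearMap.mul_apply]
      nth_rewrite 3 [← hCadj]
      rw [ContinuousLinearMap.adjoint_inner_right]
    rw [e1, hCC]
    have e2 : (X + t • (1 : H →L[ℂ] H)) ξ = X ξ + t • ξ := by
      simp [ContinuousLinearMap.add_apply, ContinuousLinearMap.smul_apply]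
    rw [e2, inner_add_right, map_add]
    have e3 : re (⟪ξ, X ξ⟫_ℂ) = ∑ j, ‖(x j) ξ‖ ^ 2 := by
      have e4 : X ξ = ∑ j, (star (x j) * (x j)) ξ := by
        rw [hXdef, ContinuousLinearMap.sum_apply]
      rw [e4, inner_sum, map_sum]
      refine Finset.sum_congr rfl fun j _ => ?_
      rw [ContinuousLinearMap.mul_apply, ContinuousLinearMap.star_eq_adjoint,
        ContinuousLinearMap.adjoint_inner_right, inner_self_eq_norm_sq (𝕜 := ℂ)]
    have e5 : re (⟪ξ, t • ξ⟫_ℂ) = t := by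
      rw [RCLike.real_smul_eq_coe_smul (K := ℂ), inner_smul_right, RCLike.re_ofReal_mul,
        inner_self_eq_norm_sq (𝕜 := ℂ), hξ]
      ring
    rw [e3, e5]
  have hxξ : ∀ j, ‖(x j) ξ‖ ^ 2 ≤ ‖u j‖ ^ 2 + (2 * d * m + d ^ 2) := by
    intro j
    have e1 : ‖(x j) ξ‖ ≤ ‖u j‖ + d := by
      have e2 : (x j) ξ = u j + ((x j) ξ - u j) := by abel
      calc ‖(x j) ξ‖ = ‖u j + ((x j) ξ - u j)‖ := by rw [← e2]
        _ ≤ ‖u j‖ + ‖(x j) ξ - u j‖ := norm_add_le _ _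
        _ ≤ ‖u j‖ + d := by linarith [(hxd j).le]
    nlinarith [norm_nonneg ((x j) ξ), norm_nonneg (u j), humj j, hd.le]
  have hh0ub : ‖h₀‖ ^ 2 ≤ (m + D) ^ 2 + t := by
    rw [hh0sq]
    have e1 : ∑ j, ‖(x j) ξ‖ ^ 2 ≤ ∑ j, (‖u j‖ ^ 2 + (2 * d * m + d ^ 2)) :=
      Finset.sum_le_sum fun j _ => hxξ j
    have e2 : ∑ j, (‖u j‖ ^ 2 + (2 * d * m + d ^ 2)) = m ^ 2 + n * (2 * d * m + d ^ 2) := by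
      rw [Finset.sum_add_distrib, ← PiLp.norm_sq_eq_of_L2, ← hmdef, Finset.sum_const,
        Finset.card_univ, Fintype.card_fin, nsmul_eq_mul]
    have e3 : (n : ℝ) * (2 * d * m + d ^ 2) = 2 * D * m + D * d := by
      rw [hDdef]; ring
    have e4 : D * d ≤ D ^ 2 := by nlinarith [hdD, hD0]
    nlinarith [e1]
  have hth0 : t ≤ ‖h₀‖ ^ 2 := by
    rw [hh0sq]
    have : 0 ≤ ∑ j, ‖(x j) ξ‖ ^ 2 := Finset.sum_nonneg fun j _ => sq_nonneg _
    linarith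
  have hh0pos : 0 < ‖h₀‖ := by nlinarith [norm_nonneg h₀, ht]
  have hh0le : ‖h₀‖ ≤ m + D + ε / 2 := by
    nlinarith [norm_nonneg h₀, hm0, hD0, hε]
  refine ⟨r, hrM, hrow1, ?_⟩
  have hfinal : (m - ε) * ‖h₀‖ ≤ ‖g‖ * ‖h₀‖ := by
    have step1 : (m - ε) * ‖h₀‖ ≤ m ^ 2 - D * m := by nlinarith [hm, hDε, hε, hm0, hh0pos.le]
    calc (m - ε) * ‖h₀‖ ≤ m ^ 2 - D * m := step1
      _ ≤ ‖h₀‖ * ‖g‖ := le_trans hre2 hCS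
      _ = ‖g‖ * ‖h₀‖ := mul_comm _ _
  exact le_of_mul_le_mul_right hfinal hh0pos
lemma rowOp_comp_zero {n : ℕ} (s : Fin n → (H →L[ℂ] H)) (h : rowOp s = 0) :
    ∀ j, s j = 0 := by
  intro j
  ext h'
  have := rowOp_single s j h'
  rw [h] at this
  simpa using this.symm

/-- for a von Neumann algebra `M` with a cyclic vector and a derivation
`δ : M → B(H)`, one has `‖δ‖_cb ≤ 2‖δ‖_row`: if `K` bounds the row norm, i.e.
`‖δ_{1×n}(r)‖ ≤ K` for every row contraction `r` over `M`, then `‖δ_n(a)‖ ≤ 2K‖a‖`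
for every matrix `a` over `M`. -/
theorem stmt_12 (M : VonNeumannAlgebra H)
    (hcyc : ∃ ξ : H, Dense {y : H | ∃ x ∈ M, x ξ = y})
    (δ : (H →L[ℂ] H) →ₗ[ℂ] (H →L[ℂ] H))
    (hLeib : ∀ x ∈ M, ∀ y ∈ M, δ (x * y) = δ x * y + x * δ y)
    (K : ℝ)
    (hrow : ∀ (n : ℕ) (r : Fin n → (H →L[ℂ] H)), (∀ j, r j ∈ M) → ‖rowOp r‖ ≤ 1 →
      ‖rowOp (fun j => δ (r j))‖ ≤ K) :
    ∀ (n : ℕ) (a : Matrix (Fin n) (Fin n) (H →L[ℂ] H)), (∀ i j, a i j ∈ M) →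
      ‖amp (a.map fun x => δ x)‖ ≤ 2 * K * ‖amp a‖ := by
  -- K is nonnegative
  have hK0 : 0 ≤ K := by
    have h1 : ‖rowOp (fun _ : Fin 0 => (0 : H →L[ℂ] H))‖ ≤ 1 := by
      rw [rowOp_zero]
      exact le_trans (le_of_eq ContinuousLinearMap.opNorm_zero) zero_le_one
    have h2 := hrow 0 (fun _ => 0) (fun j => j.elim0) h1
    exact le_trans (ContinuousLinearMap.opNorm_nonneg _) h2
  -- scaled row bound
  have hrow' : ∀ (n : ℕ) (s : Fin n → (H →L[ℂ] H)), (∀ j, s j ∈ M) →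
      ‖rowOp (fun j => δ (s j))‖ ≤ K * ‖rowOp s‖ := by
    intro n s hsM
    rcases eq_or_ne ‖rowOp s‖ 0 with hc | hc
    · have hs0 : rowOp s = 0 := by rwa [ContinuousLinearMap.opNorm_zero_iff] at hc
      have hz : ∀ j, s j = 0 := rowOp_comp_zero s hs0
      have : (fun j => δ (s j)) = fun _ : Fin n => (0 : H →L[ℂ] H) := by
        funext j; rw [hz j, map_zero]
      rw [this, rowOp_zero, hc, mul_zero]
      exact le_of_eq ContinuousLinearMap.opNorm_zero
    · set c : ℝ := ‖rowOp s‖ with hcdef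
      have hcpos : 0 < c := lt_of_le_of_ne (ContinuousLinearMap.opNorm_nonneg _) (Ne.symm hc)
      set r : Fin n → (H →L[ℂ] H) := fun j => ((c : ℂ))⁻¹ • s j with hrdef
      have hrM : ∀ j, r j ∈ M := by
        intro j
        rw [hrdef]
        simp only
        rw [Algebra.smul_def]
        exact mul_mem (M.toStarSubalgebra.algebraMap_mem _) (hsM j)
      have hnc : ‖((c : ℂ))⁻¹‖ = c⁻¹ := by
        rw [norm_inv, Complex.norm_real, Real.norm_eq_abs, abs_of_pos hcpos]
      have hccne : ((c : ℂ)) ≠ 0 := by exact_mod_cast hc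
      have hr1 : ‖rowOp r‖ ≤ 1 := by
        rw [hrdef, rowOp_smul]
        refine le_trans (ContinuousLinearMap.opNorm_smul_le _ _) ?_
        rw [hnc, ← hcdef, inv_mul_cancel₀ hc]
      have h2 := hrow n r hrM hr1
      have h3 : (fun j => δ (r j)) = fun j => ((c : ℂ))⁻¹ • δ (s j) := by
        funext j; rw [hrdef]; simp only; rw [map_smul]
      rw [h3, rowOp_smul] at h2
      have e : rowOp (fun j => δ (s j)) =
          (c : ℂ) • (((c : ℂ))⁻¹ • rowOp (fun j => δ (s j))) := by
        rw [smul_smul, mul_inv_cancel₀ hccne, one_smul]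
      calc ‖rowOp (fun j => δ (s j))‖
          = ‖(c : ℂ) • (((c : ℂ))⁻¹ • rowOp (fun j => δ (s j)))‖ := by rw [← e]
        _ ≤ ‖(c : ℂ)‖ * ‖((c : ℂ))⁻¹ • rowOp (fun j => δ (s j))‖ :=
            ContinuousLinearMap.opNorm_smul_le _ _
        _ ≤ c * K := by
            have hcc : ‖(c : ℂ)‖ = c := by
              rw [Complex.norm_real, Real.norm_eq_abs, abs_of_pos hcpos]
            rw [hcc]
            exact mul_le_mul_of_nonneg_left h2 hcpos.le
        _ = K * c := mul_comm _ _
  intro n a ha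
  set T := amp (a.map fun x => δ x) with hTdef
  set N : ℝ := ‖amp a‖ with hNdef
  have hN0 : 0 ≤ N := ContinuousLinearMap.opNorm_nonneg _
  -- the Leibniz step
  have step : ∀ r : Fin n → (H →L[ℂ] H), (∀ j, r j ∈ M) → ‖rowOp r‖ ≤ 1 →
      ‖(rowOp r) ∘L T‖ ≤ 2 * K * N := by
    intro r hrM hr1
    set s : Fin n → (H →L[ℂ] H) := fun k => ∑ j, r j * a j k with hsdef
    have hsM : ∀ k, s k ∈ M := fun k => sum_mem fun j _ => mul_mem (hrM j) (ha j k)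
    have hs_eq : rowOp s = (rowOp r) ∘L (amp a) := (rowOp_comp_amp r a).symm
    have hs_norm : ‖rowOp s‖ ≤ N := by
      rw [hs_eq]
      calc ‖(rowOp r) ∘L (amp a)‖ ≤ ‖rowOp r‖ * ‖amp a‖ :=
            ContinuousLinearMap.opNorm_comp_le _ _
        _ ≤ 1 * N := mul_le_mul_of_nonneg_right hr1 hN0
        _ = N := one_mul N
    have hδs : rowOp (fun k => δ (s k)) =
        (rowOp (fun j => δ (r j))) ∘L (amp a) + (rowOp r) ∘L T := by
      have e1 : (fun k => δ (s k)) =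
          fun k => (∑ j, δ (r j) * a j k) + (∑ j, r j * δ (a j k)) := by
        funext k
        rw [hsdef]
        simp only
        rw [map_sum]
        rw [Finset.sum_congr rfl fun j _ => hLeib (r j) (hrM j) (a j k) (ha j k)]
        rw [Finset.sum_add_distrib]
      rw [e1, rowOp_add, rowOp_comp_amp, rowOp_comp_amp]
      rfl
    have hδr : ‖rowOp (fun j => δ (r j))‖ ≤ K := hrow n r hrM hr1
    have hmain : (rowOp r) ∘L T =
        rowOp (fun k => δ (s k)) - (rowOp (fun j => δ (r j))) ∘L (amp a) := by
      rw [hδs]; abel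
    rw [hmain]
    have hns : ‖rowOp (fun k => δ (s k)) - (rowOp (fun j => δ (r j))) ∘L (amp a)‖ ≤
        ‖rowOp (fun k => δ (s k))‖ + ‖(rowOp (fun j => δ (r j))) ∘L (amp a)‖ := by
      exact norm_sub_le (rowOp (fun k => δ (s k))) ((rowOp (fun j => δ (r j))) ∘L (amp a))
    have h5 : ‖rowOp (fun k => δ (s k))‖ ≤ K * ‖rowOp s‖ := hrow' n s hsM
    have h5' : K * ‖rowOp s‖ ≤ K * N := mul_le_mul_of_nonneg_left hs_norm hK0
    have h6 : ‖(rowOp (fun j => δ (r j))) ∘L (amp a)‖ ≤ K * N := by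
      calc ‖(rowOp (fun j => δ (r j))) ∘L (amp a)‖
          ≤ ‖rowOp (fun j => δ (r j))‖ * ‖amp a‖ := ContinuousLinearMap.opNorm_comp_le _ _
        _ ≤ K * N := by
            rw [hNdef]
            exact mul_le_mul_of_nonneg_right hδr hN0
    linarith
  -- conclude
  refine le_of_forall_pos_le_add fun ε hε => ?_
  obtain ⟨v, hv1, hv2⟩ := T.exists_lt_apply_of_lt_opNorm (r := ‖T‖ - ε / 2) (by linarith)
  obtain ⟨r, hrM, hr1, hr2⟩ := approx_row M hcyc (T v) (half_pos hε)
  have h1 : ‖rowOp r (T v)‖ ≤ ‖(rowOp r) ∘L T‖ := by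
    have : rowOp r (T v) = ((rowOp r) ∘L T) v := rfl
    rw [this]
    exact ContinuousLinearMap.unit_le_opNorm _ v hv1.le
  have h2 := step r hrM hr1
  linarith
end
end
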